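/- Let R > 0 and m_1, m_2 > 0, and let w_1, w_2 ∈ ℂ with Im w_1 > 0, Im w_2 > 0 and w_1 ≠ w_2. If Re w_1 = 0 (i.e. w_1 lies on the imaginary axis), then the pair (w_1, w_2) does not satisfy the hyperbolic relative-equilibrium equations with n = 2. -/

import Mathlib

open Complex ComplexConjugate Finset

/-- The quantity `Θ_{3,(k,j)}` appearing in the denominators of the equations of
motion of the curved `n`-body problem in the Poincaré upper half plane. -/
noncomputable def halfTheta (z w : ℂ) : ℝ :=
  (((conj z + z) * (conj w + w)
      - 2 * ((((‖z‖) ^ 2 + (‖w‖) ^ 2 : ℝ)) : ℂ)) ^ 2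
    - (conj z - z) ^ 2 * (conj w - w) ^ 2).re

/-- The points `c k` satisfy the hyperbolic relative-equilibrium equations in the
Poincaré upper half plane with parameter `R` and masses `m`. -/
def HyperbolicRelEq (R : ℝ) {n : ℕ} (m : Fin n → ℝ) (c : Fin n → ℂ) : Prop :=
  ∀ k : Fin n,
    (R : ℂ) * (c k + conj (c k)) * c k / (8 * (c k - conj (c k)) ^ 4)
      = ∑ j ∈ Finset.univ.erase k,
          (m j : ℂ) * (c j - conj (c j)) ^ 2 * (c k - c j) * (conj (c j) - c k)
            / (((halfTheta (c k) (c j)) ^ ((3 : ℝ) / 2) : ℝ) : ℂ)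

lemma halfTheta_eq (z w : ℂ) :
    halfTheta z w = 4 * (((z.re - w.re) ^ 2 + (z.im - w.im) ^ 2) *
      ((z.re - w.re) ^ 2 + (z.im + w.im) ^ 2)) := by
  simp only [halfTheta, Complex.sq_norm, Complex.normSq_apply]
  simp [Complex.ext_iff, Complex.add_re, Complex.mul_re, Complex.mul_im, Complex.sub_re,
    Complex.sub_im, Complex.add_im, pow_two]
  ring

lemma halfTheta_pos (z w : ℂ) (hz : 0 < z.im) (hw : 0 < w.im) (hzw : z ≠ w) :
    0 < halfTheta z w := by
  rw [halfTheta_eq]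
  have h1 : 0 < (z.re - w.re) ^ 2 + (z.im - w.im) ^ 2 := by
    rcases eq_or_ne z.re w.re with h | h
    · have : z.im ≠ w.im := fun h' => hzw (Complex.ext h h')
      have h' : z.im - w.im ≠ 0 := sub_ne_zero.mpr this
      have : (z.im - w.im) ^ 2 > 0 := by positivity
      nlinarith [sq_nonneg (z.re - w.re)]
    · have h' : z.re - w.re ≠ 0 := sub_ne_zero.mpr h
      have : (z.re - w.re) ^ 2 > 0 := by positivity
      nlinarith [sq_nonneg (z.im - w.im)]
  have h2 : 0 < (z.re - w.re) ^ 2 + (z.im + w.im) ^ 2 := by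
    have : (z.im + w.im) ^ 2 > 0 := pow_pos (add_pos hz hw) 2
    nlinarith [sq_nonneg (z.re - w.re)]
  positivity

/-- There is no hyperbolic relative equilibrium of the curved 2-body problem in which
one body moves on the geodesic vertical half line (the imaginary axis). -/
theorem no_hyperbolicRelEq_on_imaginary_axis (R m₁ m₂ : ℝ) (hR : 0 < R)
    (hm₁ : 0 < m₁) (hm₂ : 0 < m₂)
    (w₁ w₂ : ℂ) (h₁ : 0 < w₁.im) (h₂ : 0 < w₂.im) (hne : w₁ ≠ w₂) (hre : w₁.re = 0) :
    ¬ HyperbolicRelEq R ![m₁, m₂] ![w₁, w₂] := by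
  intro H
  have h := H 0
  have hsum : (Finset.univ.erase (0 : Fin 2)) = {1} := by decide
  rw [hsum, Finset.sum_singleton] at h
  simp only [Matrix.cons_val_zero, Matrix.cons_val_one, Matrix.head_cons] at h
  -- LHS is zero
  have hl : w₁ + conj w₁ = 0 := by
    rw [Complex.add_conj, hre]
    simp
  rw [hl, mul_zero, zero_mul, zero_div] at h
  -- factors of RHS nonzero
  have hθ : 0 < halfTheta w₁ w₂ := halfTheta_pos w₁ w₂ h₁ h₂ hne
  have hθ' : ((halfTheta w₁ w₂ ^ ((3 : ℝ) / 2) : ℝ) : ℂ) ≠ 0 := by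
    have := Real.rpow_pos_of_pos hθ ((3 : ℝ) / 2)
    exact_mod_cast this.ne'
  have f1 : (m₂ : ℂ) ≠ 0 := by exact_mod_cast hm₂.ne'
  have f2 : w₂ - conj w₂ ≠ 0 := by
    intro hc
    have : (w₂ - conj w₂).im = 0 := by rw [hc]; simp
    simp [Complex.sub_im, Complex.conj_im] at this
    linarith
  have f3 : w₁ - w₂ ≠ 0 := sub_ne_zero.mpr hne
  have f4 : conj w₂ - w₁ ≠ 0 := by
    intro hc
    have : (conj w₂ - w₁).im = 0 := by rw [hc]; simp
    simp [Complex.sub_im, Complex.conj_im] at this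
    linarith
  have : (m₂ : ℂ) * (w₂ - conj w₂) ^ 2 * (w₁ - w₂) * (conj w₂ - w₁)
      / (((halfTheta w₁ w₂) ^ ((3 : ℝ) / 2) : ℝ) : ℂ) ≠ 0 := by
    apply div_ne_zero _ hθ'
    exact mul_ne_zero (mul_ne_zero (mul_ne_zero f1 (pow_ne_zero 2 f2)) f3) f4
  exact this h.symm
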